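/- Let A, B, C be three non-collinear points in the Euclidean plane, with incenter I and excenters E_A, E_B, E_C. Then (dist(E_A,I) · dist(E_B,E_C)) / (dist(E_A,E_C) · dist(E_B,I)) = dist(C,B)/dist(C,A). (This is the modulus part of the theorem on cross ratios of dual quadruplets.) -/

import Mathlib

/-- The incenter of the triangle `A B C`. -/
noncomputable def incenterPt (A B C : EuclideanSpace ℝ (Fin 2)) : EuclideanSpace ℝ (Fin 2) :=
  (dist B C + dist C A + dist A B)⁻¹ •
    (dist B C • A + dist C A • B + dist A B • C)

/-- The excenter of the triangle `A B C` opposite the first vertex `A`. -/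
noncomputable def excenterPt (A B C : EuclideanSpace ℝ (Fin 2)) : EuclideanSpace ℝ (Fin 2) :=
  (-dist B C + dist C A + dist A B)⁻¹ •
    ((-dist B C) • A + dist C A • B + dist A B • C)

set_option maxHeartbeats 1000000 in
/-- The modulus part of the cross-ratio theorem for dual quadruplets:
`(|E_A I|·|E_B E_C|)/(|E_A E_C|·|E_B I|) = |CB|/|CA|`. -/
theorem cross_ratio_modulus (A B C : EuclideanSpace ℝ (Fin 2))
    (h : AffineIndependent ℝ ![A, B, C])
    (I : EuclideanSpace ℝ (Fin 2)) (hI : I = incenterPt A B C)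
    (EA : EuclideanSpace ℝ (Fin 2)) (hEA : EA = excenterPt A B C)
    (EB : EuclideanSpace ℝ (Fin 2)) (hEB : EB = excenterPt B C A)
    (EC : EuclideanSpace ℝ (Fin 2)) (hEC : EC = excenterPt C A B) :
    dist EA I * dist EB EC / (dist EA EC * dist EB I) = dist C B / dist C A := by
  have h3 : ¬ Collinear ℝ ({A, B, C} : Set (EuclideanSpace ℝ (Fin 2))) :=
    affineIndependent_iff_not_collinear_set.mp h
  have hAB : A ≠ B := by
    simpa using h.injective.ne (show (0 : Fin 3) ≠ 1 by decide)
  have hBC : B ≠ C := by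
    simpa using h.injective.ne (show (1 : Fin 3) ≠ 2 by decide)
  have hCA : C ≠ A := by
    simpa using h.injective.ne (show (2 : Fin 3) ≠ 0 by decide)
  set a := dist B C with hadef
  set b := dist C A with hbdef
  set c := dist A B with hcdef
  have ha : 0 < a := dist_pos.mpr hBC
  have hb : 0 < b := dist_pos.mpr hCA
  have hc : 0 < c := dist_pos.mpr hAB
  -- strict triangle inequalities
  have tri : ∀ X Y Z : EuclideanSpace ℝ (Fin 2), ({X,Y,Z} : Set _) = {A,B,C} →
      dist X Z < dist X Y + dist Y Z := by
    intro X Y Z hset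
    rcases lt_or_eq_of_le (dist_triangle X Y Z) with h' | h'
    · exact h'
    · exact absurd (hset ▸ (dist_add_dist_eq_iff.mp h'.symm).collinear) h3
  have hD1 : 0 < -a + b + c := by
    have := tri B A C (by ext q; simp; tauto)
    rw [dist_comm B A, dist_comm A C] at this
    linarith
  have hD2 : 0 < a - b + c := by
    have := tri C B A (by ext q; simp; tauto)
    rw [dist_comm C B, dist_comm B A] at this
    linarith
  have hD3 : 0 < a + b - c := by
    have := tri A C B (by ext q; simp; tauto)
    rw [dist_comm A C, dist_comm C B] at this
    linarith
  have hs : 0 < a + b + c := by linarith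
  have hD1' : (-a + b + c) ≠ 0 := ne_of_gt hD1
  have hD2' : (a - b + c) ≠ 0 := ne_of_gt hD2
  have hD3' : (a + b - c) ≠ 0 := ne_of_gt hD3
  have hs' : (a + b + c) ≠ 0 := ne_of_gt hs
  have hE1 : (-b + c + a) ≠ 0 := ne_of_gt (by linarith)
  have hE2 : (-c + a + b) ≠ 0 := ne_of_gt (by linarith)
  have hE3 : (b - c + a) ≠ 0 := ne_of_gt (by linarith)
  have hE4 : (c - a + b) ≠ 0 := ne_of_gt (by linarith)
  have hE5 : (a - b + c) ≠ 0 := ne_of_gt (by linarith)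
  have hE6 : (b + c + a) ≠ 0 := ne_of_gt (by linarith)
  have hE7 : (c + a + b) ≠ 0 := ne_of_gt (by linarith)
  -- vectors
  set u := B - A with hudef
  set v := C - A with hvdef
  have hu : ‖u‖ = c := by rw [hudef, hcdef, dist_eq_norm, norm_sub_rev]
  have hv : ‖v‖ = b := by rw [hvdef, hbdef, dist_eq_norm]
  have hvu : ‖v - u‖ = a := by
    rw [hvdef, hudef, hadef, dist_eq_norm, norm_sub_rev]
    congr 1
    abel
  set p : ℝ := inner ℝ u v with hpdef
  have exp : ∀ s t : ℝ, ‖s • u + t • v‖ ^ 2 = s^2*c^2 + 2*s*t*p + t^2*b^2 := by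
    intro s t
    rw [norm_add_sq_real, norm_smul, norm_smul, real_inner_smul_left, real_inner_smul_right,
      hu, hv, Real.norm_eq_abs, Real.norm_eq_abs, mul_pow, mul_pow, sq_abs, sq_abs, ← hpdef]
    ring
  have ha2 : p = (c^2 + b^2 - a^2)/2 := by
    have h6 : ‖v - u‖ ^ 2 = ‖v‖ ^ 2 - 2 * inner ℝ v u + ‖u‖ ^ 2 := norm_sub_sq_real v u
    rw [hvu, hv, hu, real_inner_comm, ← hpdef] at h6
    linarith
  -- the four difference vectors
  set w1 := b • u + c • v with hw1
  set w2 := (-b) • u + c • v with hw2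
  set w3 := (a - c) • u + c • v with hw3
  set w4 := (-(a + c)) • u + c • v with hw4
  have k1 : EA - I = ((2*a)/((-a+b+c)*(a+b+c))) • w1 := by
    rw [hEA, hI, excenterPt, incenterPt, hw1, hudef, hvdef]
    simp only [← hadef, ← hbdef, ← hcdef]
    match_scalars <;> field_simp <;> ring
  have k2 : EB - EC = ((2*a)/((a-b+c)*(a+b-c))) • w2 := by
    rw [hEB, hEC, excenterPt, excenterPt, hw2, hudef, hvdef]
    simp only [← hadef, ← hbdef, ← hcdef]
    match_scalars <;> field_simp <;> ring
  have k3 : EA - EC = ((2*b)/((-a+b+c)*(a+b-c))) • w3 := by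
    rw [hEA, hEC, excenterPt, excenterPt, hw3, hudef, hvdef]
    simp only [← hadef, ← hbdef, ← hcdef]
    match_scalars <;> field_simp <;> ring
  have k4 : EB - I = ((2*b)/((a-b+c)*(a+b+c))) • w4 := by
    rw [hEB, hI, excenterPt, incenterPt, hw4, hudef, hvdef]
    simp only [← hadef, ← hbdef, ← hcdef]
    match_scalars <;> field_simp <;> ring
  -- distances from difference vectors
  have d1 : dist EA I = ((2*a)/((-a+b+c)*(a+b+c))) * ‖w1‖ := by
    rw [dist_eq_norm, k1, norm_smul, Real.norm_eq_abs, abs_of_pos (by positivity)]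
  have d2 : dist EB EC = ((2*a)/((a-b+c)*(a+b-c))) * ‖w2‖ := by
    rw [dist_eq_norm, k2, norm_smul, Real.norm_eq_abs, abs_of_pos (by positivity)]
  have d3 : dist EA EC = ((2*b)/((-a+b+c)*(a+b-c))) * ‖w3‖ := by
    rw [dist_eq_norm, k3, norm_smul, Real.norm_eq_abs, abs_of_pos (by positivity)]
  have d4 : dist EB I = ((2*b)/((a-b+c)*(a+b+c))) * ‖w4‖ := by
    rw [dist_eq_norm, k4, norm_smul, Real.norm_eq_abs, abs_of_pos (by positivity)]
  -- nondegeneracy of w3, w4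
  have hst : ∀ s t : ℝ, t ≠ 0 → s • u + t • v ≠ 0 := by
    intro s t ht e
    apply h3
    rw [collinear_iff_of_mem (show A ∈ ({A,B,C} : Set _) by simp)]
    refine ⟨u, ?_⟩
    intro q hq
    have hv' : v = (-(t⁻¹*s)) • u := by
      have h5 : t • v = t • ((-(t⁻¹*s)) • u) := by
        rw [smul_smul]
        have h7 : t * -(t⁻¹ * s) = -s := by field_simp
        rw [h7, neg_smul, eq_neg_iff_add_eq_zero, add_comm]
        exact e
      exact smul_right_injective (EuclideanSpace ℝ (Fin 2)) ht h5
    rcases hq with rfl | rfl | rfl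
    · exact ⟨0, by simp⟩
    · refine ⟨1, ?_⟩
      show q = (1:ℝ) • u + A
      rw [one_smul, hudef]; abel
    · refine ⟨-(t⁻¹*s), ?_⟩
      show q = (-(t⁻¹*s)) • u + A
      rw [← hv', hvdef]; abel
  have hw3' : ‖w3‖ ≠ 0 := norm_ne_zero_iff.mpr (by rw [hw3]; exact hst _ _ (ne_of_gt hc))
  have hw4' : ‖w4‖ ≠ 0 := norm_ne_zero_iff.mpr (by rw [hw4]; exact hst _ _ (ne_of_gt hc))
  -- key identity
  have key : a * (‖w1‖ * ‖w2‖) = b * (‖w3‖ * ‖w4‖) := by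
    have sq1 : (a * (‖w1‖ * ‖w2‖))^2 = (b * (‖w3‖ * ‖w4‖))^2 := by
      rw [mul_pow, mul_pow, mul_pow, mul_pow, hw1, hw2, hw3, hw4, exp, exp, exp, exp, ha2]
      ring
    exact (sq_eq_sq₀ (by positivity) (by positivity)).mp sq1
  rw [dist_comm C B, ← hadef]
  rw [d1, d2, d3, d4]
  rw [div_eq_div_iff (by positivity) (by positivity)]
  field_simp
  linear_combination key
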